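/- arXiv:0811.2741 — 4 statements merged into one kernel-verified Lean document; each statement's English description precedes it below -/
import Mathlib

section
/- Let ς₁ and ς₂ be locally finite point configurations in ℝ^d with ς₁ ⊆ ς₂. Define the peeling sequence by C₁(ς) = convexHull(ς) and inductively C_{k+1}(ς) = convexHull({x ∈ ς : x ∉ boundary of C_k(ς)} restricted to points of ς inside C_k(ς)). Then for every k, C_k(ς₁) ⊆ C_k(ς₂). -/
open Set MeasureTheory Filter Topology ProbabilityTheory Pointwise

noncomputable section

abbrev Euc (d : ℕ) := EuclideanSpace ℝ (Fin d)

/-- The iterated "interior point" configurations of the peeling procedure: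
`peelSet ς 0 = ς` and `peelSet ς (n+1)` consists of the points of `peelSet ς n`
not on the boundary of its convex hull. -/
def peelSet {d : ℕ} (ς : Set (Euc d)) : ℕ → Set (Euc d)
  | 0 => ς
  | n + 1 => {x ∈ peelSet ς n | x ∉ frontier (convexHull ℝ (peelSet ς n))}

/-- `peelHull ς n` is the `(n+1)`-st convex hull `C_{n+1}(ς)` of the peeling procedure. -/
def peelHull {d : ℕ} (ς : Set (Euc d)) (n : ℕ) : Set (Euc d) :=
  convexHull ℝ (peelSet ς n)

/-- A configuration: countable with finitely many points outside each ball around 0. -/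
def IsConfiguration {d : ℕ} (ς : Set (Euc d)) : Prop :=
  ς.Countable ∧ ∀ δ : ℝ, 0 < δ → {x ∈ ς | δ ≤ ‖x‖}.Finite

/-- No `d+1` points of `ς` lie on a common hyperplane. -/
def GeneralPosition {d : ℕ} (ς : Set (Euc d)) : Prop :=
  ∀ s : Finset (Euc d), ↑s ⊆ ς → s.card = d + 1 →
    ¬ ∃ (f : Euc d →ₗ[ℝ] ℝ) (c : ℝ), f ≠ 0 ∧ ∀ x ∈ s, f x = c

/-- Non-unilateral configuration: every peel contains `0` as interior point. -/
def NonUnilateral {d : ℕ} (ς : Set (Euc d)) : Prop :=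
  ∀ k : ℕ, (0 : Euc d) ∈ interior (peelHull ς k)

/-- `pts` is a Poisson point process with intensity `μ`: counts in sets of finite
intensity are Poisson distributed and counts in disjoint sets are independent. -/
def IsPoissonPP {Ω : Type*} [MeasurableSpace Ω] (P : Measure Ω)
    {E : Type*} [MeasurableSpace E] (pts : Ω → Set E) (μ : Measure E) : Prop :=
  (∀ s : Set E, MeasurableSet s → μ s ≠ ⊤ →
      (∀ᵐ ω ∂P, (pts ω ∩ s).Finite) ∧
      ∀ k : ℕ, P {ω | (pts ω ∩ s).ncard = k} =
        ENNReal.ofReal (Real.exp (-(μ s).toReal) * (μ s).toReal ^ k / (Nat.factorial k))) ∧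
  (∀ n : ℕ, ∀ s : Fin n → Set E, (∀ i, MeasurableSet (s i)) →
      Pairwise (Function.onFun Disjoint s) →
      iIndepFun (fun i ω => (pts ω ∩ s i).ncard) P)

/-- The radial measure on `(0,∞)` with density `α r^{-α-1}`. -/
def radialMeasure (α : ℝ) : Measure ℝ :=
  ((volume : Measure ℝ).restrict (Ioi 0)).withDensity fun r => ENNReal.ofReal (α * r ^ (-α - 1))

/-- The intensity measure `θ × ν` transported to `ℝ^d \ {0}` via polar coordinates. -/
def intensityMeasure {d : ℕ} (α : ℝ) (ν : Measure (Metric.sphere (0 : Euc d) 1)) :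
    Measure (Euc d) :=
  Measure.map (fun p : ℝ × Metric.sphere (0 : Euc d) 1 => p.1 • (p.2 : Euc d))
    ((radialMeasure α).prod ν)

/-- i.i.d. sequence of standard (rate 1) exponential random variables. -/
def IsIIDExp {Ω : Type*} [MeasurableSpace Ω] (P : Measure Ω) (γ : ℕ → Ω → ℝ) : Prop :=
  iIndepFun γ P ∧ ∀ i, Measure.map (γ i) P = expMeasure 1


/-- Atomic intensity measure: superposition of radial measures on the rays `t • e i`. -/
def atomicIntensity {d l : ℕ} (α : ℝ) (ν : Fin l → ℝ) (e : Fin l → Euc d) : Measure (Euc d) :=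
  Measure.sum fun i : Fin l =>
    (ENNReal.ofReal (ν i)) • Measure.map (fun r : ℝ => r • e i) (radialMeasure α)

/-- Positive cone generated by a finite family of vectors. -/
def posCone {d l : ℕ} (e : Fin l → Euc d) : Set (Euc d) :=
  {x | ∃ c : Fin l → ℝ, (∀ i, 0 ≤ c i) ∧ x = ∑ i, c i • e i}

/-- The configuration formed by the points `ν_i^{1/α} Γ_{k+1}^{-1/α} e_i`. -/
def rayConfig {d l : ℕ} (α : ℝ) (ν : Fin l → ℝ) (e : Fin l → Euc d)
    {Ω : Type*} (γ : Fin l → ℕ → Ω → ℝ) (ω : Ω) : Set (Euc d) :=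
  ⋃ i : Fin l, Set.range fun k : ℕ =>
    ((ν i) ^ (1/α) * (∑ j ∈ Finset.range (k+1), γ i j ω) ^ (-(1/α))) • e i

/-- maximal norm over a set. -/
def maxNorm {d : ℕ} (A : Set (Euc d)) : ℝ := sSup ((fun x => ‖x‖) '' A)

theorem peelSet_mono' {d : ℕ} (ς₁ ς₂ : Set (Euc d)) (hsub : ς₁ ⊆ ς₂) :
    ∀ n : ℕ, peelSet ς₁ n ⊆ peelSet ς₂ n := by
  intro n
  induction n with
  | zero => exact hsub
  | succ n ih =>
    rintro x ⟨hx, hf⟩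
    have hx2 : x ∈ peelSet ς₂ n := ih hx
    have hhull : x ∈ convexHull ℝ (peelSet ς₁ n) := subset_convexHull ℝ _ hx
    have hint : x ∈ interior (convexHull ℝ (peelSet ς₁ n)) := by
      by_contra h
      exact hf ⟨subset_closure hhull, h⟩
    have hint2 : x ∈ interior (convexHull ℝ (peelSet ς₂ n)) :=
      interior_mono (convexHull_mono ih) hint
    exact ⟨hx2, fun hfr => hfr.2 hint2⟩

/-- monotonicity of the peeling procedure. -/
theorem peelHull_mono {d : ℕ} (ς₁ ς₂ : Set (Euc d))
    (h₁ : IsConfiguration ς₁) (h₂ : IsConfiguration ς₂) (hsub : ς₁ ⊆ ς₂) :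
    ∀ k : ℕ, peelHull ς₁ k ⊆ peelHull ς₂ k := fun k =>
  convexHull_mono (peelSet_mono' ς₁ ς₂ hsub k)

end
end

section
/- Let ς and ς′ be non-unilateral configurations in ℝ^d (no d+1 points of which lie on a common hyperplane) with ς′ ⊆ ς and #(ς \ ς′) = m < ∞. Then for every k ∈ ℕ, C_{k+m}(ς) ⊆ C_k(ς′) ⊆ C_k(ς), where C_k denotes the k-th convex hull of the peeling procedure. -/
open Set MeasureTheory Filter Topology ProbabilityTheory Pointwise

noncomputable section

lemma mem_peelSet_succ {d : ℕ} {ς : Set (Euc d)} {n : ℕ} {x : Euc d} :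
    x ∈ peelSet ς (n+1) ↔ x ∈ peelSet ς n ∧ x ∉ frontier (convexHull ℝ (peelSet ς n)) := by
  simp [peelSet]

lemma mem_interior_of_not_frontier {X : Type*} [TopologicalSpace X] {s : Set X} {x : X}
    (hx : x ∈ s) (h : x ∉ frontier s) : x ∈ interior s := by
  by_contra h'
  exact h ⟨subset_closure hx, h'⟩

lemma not_frontier_of_mem_interior {X : Type*} [TopologicalSpace X] {s : Set X} {x : X}
    (h : x ∈ interior s) : x ∉ frontier s := fun hf => hf.2 h

lemma peelSet_mono {d : ℕ} {σ τ : Set (Euc d)} (h : σ ⊆ τ) :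
    ∀ k, peelSet σ k ⊆ peelSet τ k := by
  intro k
  induction k with
  | zero => exact h
  | succ n ih =>
    intro x hx
    rw [mem_peelSet_succ] at hx ⊢
    refine ⟨ih hx.1, not_frontier_of_mem_interior ?_⟩
    exact interior_mono (convexHull_mono ih)
      (mem_interior_of_not_frontier (subset_convexHull ℝ _ hx.1) hx.2)

lemma peelSet_subset_base {d : ℕ} (σ : Set (Euc d)) : ∀ k, peelSet σ k ⊆ σ := by
  intro k
  induction k with
  | zero => exact subset_rfl
  | succ n ih => exact fun x hx => ih (mem_peelSet_succ.mp hx).1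

lemma isCompact_convexJoin {d : ℕ} {K L : Set (Euc d)} (hK : IsCompact K) (hL : IsCompact L) :
    IsCompact (convexJoin ℝ K L) := by
  have himg : convexJoin ℝ K L =
      (fun p : ℝ × Euc d × Euc d => (1 - p.1) • p.2.1 + p.1 • p.2.2) ''
        ((Icc (0:ℝ) 1) ×ˢ K ×ˢ L) := by
    ext x
    simp only [mem_convexJoin, Set.mem_image, Set.mem_prod]
    constructor
    · rintro ⟨a, ha, b, hb, hx⟩
      rw [segment_eq_image] at hx
      obtain ⟨θ, hθ, rfl⟩ := hx
      exact ⟨(θ, a, b), ⟨hθ, ha, hb⟩, rfl⟩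
    · rintro ⟨⟨θ, a, b⟩, ⟨hθ, ha, hb⟩, rfl⟩
      refine ⟨a, ha, b, hb, ?_⟩
      rw [segment_eq_image]
      exact ⟨θ, hθ, rfl⟩
  rw [himg]
  exact (isCompact_Icc.prod (hK.prod hL)).image (by fun_prop)

lemma isClosed_convexHull_config {d : ℕ} {σ S : Set (Euc d)} (hσ : IsConfiguration σ)
    (hS : S ⊆ σ) (h0 : (0 : Euc d) ∈ interior (convexHull ℝ S)) :
    IsClosed (convexHull ℝ S) := by
  obtain ⟨r, hrpos, hball⟩ := Metric.mem_nhds_iff.mp (mem_interior_iff_mem_nhds.mp h0)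
  have hr2 : (0:ℝ) < r / 2 := by positivity
  set F : Set (Euc d) := insert 0 {x ∈ S | r/2 ≤ ‖x‖} with hF
  have hFfin : F.Finite :=
    ((hσ.2 (r/2) hr2).subset (fun x hx => ⟨hS hx.1, hx.2⟩)).insert 0
  have hFne : F.Nonempty := ⟨0, Set.mem_insert 0 _⟩
  have hBne : (Metric.closedBall (0:Euc d) (r/2)).Nonempty :=
    ⟨0, Metric.mem_closedBall_self hr2.le⟩
  have hcover : S ⊆ F ∪ Metric.closedBall 0 (r/2) := by
    intro x hx
    by_cases h : r/2 ≤ ‖x‖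
    · exact Or.inl (Set.mem_insert_of_mem _ ⟨hx, h⟩)
    · exact Or.inr (by
        simpa [Metric.mem_closedBall, dist_zero_right] using (le_of_not_ge h))
  have hsub2 : F ∪ Metric.closedBall 0 (r/2) ⊆ convexHull ℝ S := by
    rintro x (hx | hx)
    · rcases Set.mem_insert_iff.mp hx with rfl | hx'
      · exact interior_subset h0
      · exact subset_convexHull ℝ S hx'.1
    · refine hball ?_
      rw [Metric.mem_ball]
      rw [Metric.mem_closedBall] at hx
      linarith
  have heq : convexHull ℝ S = convexHull ℝ (F ∪ Metric.closedBall 0 (r/2)) :=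
    le_antisymm (convexHull_mono hcover) (convexHull_min hsub2 (convex_convexHull ℝ S))
  have hjoin : convexHull ℝ (F ∪ Metric.closedBall 0 (r/2)) =
      convexJoin ℝ (convexHull ℝ F) (Metric.closedBall (0:Euc d) (r/2)) := by
    rw [convexHull_union hFne hBne, (convex_closedBall _ _).convexHull_eq]
  rw [heq, hjoin]
  exact (isCompact_convexJoin (hFfin.isCompact_convexHull ℝ) (isCompact_closedBall _ _)).isClosed

lemma mem_convexHull_of_interior_insert {d : ℕ} {A : Set (Euc d)} {p : Euc d}
    (hA : IsClosed (convexHull ℝ A)) (h0 : (0 : Euc d) ∈ convexHull ℝ A)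
    (hp : p ∈ interior (convexHull ℝ (insert p A))) : p ∈ convexHull ℝ A := by
  by_contra hpc
  obtain ⟨f, u, hfa, hup⟩ := geometric_hahn_banach_closed_point (convex_convexHull ℝ A) hA hpc
  have hsub : convexHull ℝ (insert p A) ⊆ {x | f x ≤ f p} := by
    apply convexHull_min
    · rintro y (rfl | hy)
      · exact Set.mem_setOf.mpr le_rfl
      · exact Set.mem_setOf.mpr ((hfa y (subset_convexHull ℝ A hy)).trans hup).le
    · exact convex_halfSpace_le (LinearMap.isLinear f.toLinearMap) (f p)
  have hp' : p ∈ interior {x | f x ≤ f p} := interior_mono hsub hp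
  obtain ⟨ε, hεpos, hball⟩ := Metric.mem_nhds_iff.mp (mem_interior_iff_mem_nhds.mp hp')
  have hv : ∀ v : Euc d, f v ≤ 0 := by
    intro v
    by_cases hv0 : v = 0
    · simp [hv0]
    have hnv : 0 < ‖v‖ := norm_pos_iff.mpr hv0
    set t : ℝ := ε / (2 * ‖v‖) with ht
    have htpos : 0 < t := by positivity
    have hcalc : t * ‖v‖ < ε := by
      have h2 : t * ‖v‖ = ε / 2 := by
        rw [ht]; field_simp
      rw [h2]; linarith
    have hmem : p + t • v ∈ Metric.ball p ε := by
      rw [Metric.mem_ball, dist_eq_norm, add_sub_cancel_left, norm_smul, Real.norm_eq_abs,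
        abs_of_pos htpos]
      exact hcalc
    have hle : f (p + t • v) ≤ f p := hball hmem
    rw [map_add, f.map_smul, smul_eq_mul] at hle
    by_contra hfv
    push_neg at hfv
    nlinarith
  have h1 : (0:ℝ) < u := by simpa using hfa 0 h0
  have h2 : f p ≤ 0 := hv p
  linarith

lemma stepP {d : ℕ} (σ : Set (Euc d)) (p : Euc d) (hcσ : IsConfiguration σ)
    (h0 : ∀ j, (0 : Euc d) ∈ interior (convexHull ℝ (peelSet σ j))) :
    ∀ k : ℕ,
      (peelSet (insert p σ) (k+1) \ {p} ⊆ peelSet σ k) ∧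
      (p ∈ peelSet (insert p σ) (k+1) →
        peelSet (insert p σ) (k+1) \ {p} ⊆ peelSet σ (k+1) ∧
        p ∈ convexHull ℝ (peelSet σ k)) := by
  intro k
  induction k with
  | zero =>
    constructor
    · rintro x ⟨hx, hxp⟩
      have hx0 : x ∈ insert p σ := (mem_peelSet_succ.mp hx).1
      rcases hx0 with rfl | hxσ
      · exact absurd rfl hxp
      · exact hxσ
    · intro hp1
      obtain ⟨hp0, hpf⟩ := mem_peelSet_succ.mp hp1
      have hpint : p ∈ interior (convexHull ℝ (insert p σ)) :=
        mem_interior_of_not_frontier (subset_convexHull ℝ _ hp0) hpf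
      have hclosed : IsClosed (convexHull ℝ σ) :=
        isClosed_convexHull_config hcσ subset_rfl (h0 0)
      have hpmem : p ∈ convexHull ℝ σ :=
        mem_convexHull_of_interior_insert hclosed (interior_subset (h0 0)) hpint
      refine ⟨?_, hpmem⟩
      rintro x ⟨hx, hxp⟩
      obtain ⟨hx0, hxf⟩ := mem_peelSet_succ.mp hx
      have hxσ : x ∈ σ := by
        rcases hx0 with rfl | h
        · exact absurd rfl hxp
        · exact h
      have heq : convexHull ℝ (insert p σ) ⊆ convexHull ℝ σ :=
        convexHull_min (Set.insert_subset_iff.mpr ⟨hpmem, subset_convexHull ℝ σ⟩)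
          (convex_convexHull ℝ σ)
      have hxint : x ∈ interior (convexHull ℝ σ) :=
        interior_mono heq (mem_interior_of_not_frontier (subset_convexHull ℝ _ hx0) hxf)
      exact mem_peelSet_succ.mpr ⟨hxσ, not_frontier_of_mem_interior hxint⟩
  | succ k ih =>
    obtain ⟨ih1, ih2⟩ := ih
    constructor
    · rintro x ⟨hx, hxp⟩
      obtain ⟨hx1, hx2⟩ := mem_peelSet_succ.mp hx
      by_cases hpk : p ∈ peelSet (insert p σ) (k+1)
      · exact (ih2 hpk).1 ⟨hx1, hxp⟩
      · have hsub1 : peelSet (insert p σ) (k+1) ⊆ peelSet σ k := by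
          intro y hy
          refine ih1 ⟨hy, ?_⟩
          intro hyp
          simp only [Set.mem_singleton_iff] at hyp
          exact hpk (hyp ▸ hy)
        have hxint := mem_interior_of_not_frontier (subset_convexHull ℝ _ hx1) hx2
        have hxint' := interior_mono (convexHull_mono hsub1) hxint
        exact mem_peelSet_succ.mpr ⟨hsub1 hx1, not_frontier_of_mem_interior hxint'⟩
    · intro hp2
      obtain ⟨hp1, hpf⟩ := mem_peelSet_succ.mp hp2
      obtain ⟨ihA, ihB⟩ := ih2 hp1
      have hSsub : peelSet (insert p σ) (k+1) ⊆ insert p (peelSet σ (k+1)) := by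
        intro y hy
        by_cases hyp : y = p
        · rw [hyp]; exact Set.mem_insert _ _
        · exact Set.mem_insert_of_mem _ (ihA ⟨hy, hyp⟩)
      have hpint : p ∈ interior (convexHull ℝ (insert p (peelSet σ (k+1)))) :=
        interior_mono (convexHull_mono hSsub)
          (mem_interior_of_not_frontier (subset_convexHull ℝ _ hp1) hpf)
      have hclosed : IsClosed (convexHull ℝ (peelSet σ (k+1))) :=
        isClosed_convexHull_config hcσ (peelSet_subset_base σ (k+1)) (h0 (k+1))
      have hpmem : p ∈ convexHull ℝ (peelSet σ (k+1)) :=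
        mem_convexHull_of_interior_insert hclosed (interior_subset (h0 (k+1))) hpint
      refine ⟨?_, hpmem⟩
      rintro x ⟨hx, hxp⟩
      obtain ⟨hx1, hx2⟩ := mem_peelSet_succ.mp hx
      have hxin : x ∈ peelSet σ (k+1) := ihA ⟨hx1, hxp⟩
      have hins : convexHull ℝ (insert p (peelSet σ (k+1))) ⊆ convexHull ℝ (peelSet σ (k+1)) :=
        convexHull_min (Set.insert_subset_iff.mpr ⟨hpmem, subset_convexHull ℝ _⟩)
          (convex_convexHull ℝ _)
      have hxint : x ∈ interior (convexHull ℝ (peelSet σ (k+1))) :=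
        interior_mono ((convexHull_mono hSsub).trans hins)
          (mem_interior_of_not_frontier (subset_convexHull ℝ _ hx1) hx2)
      exact mem_peelSet_succ.mpr ⟨hxin, not_frontier_of_mem_interior hxint⟩

lemma stepHull {d : ℕ} (σ : Set (Euc d)) (p : Euc d) (hcσ : IsConfiguration σ)
    (h0 : ∀ j, (0 : Euc d) ∈ interior (convexHull ℝ (peelSet σ j))) (k : ℕ) :
    peelHull (insert p σ) (k+1) ⊆ peelHull σ k := by
  have hP := stepP σ p hcσ h0 k
  show convexHull ℝ (peelSet (insert p σ) (k+1)) ⊆ convexHull ℝ (peelSet σ k)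
  apply convexHull_min _ (convex_convexHull ℝ _)
  intro x hx
  by_cases hxp : x = p
  · exact hxp ▸ (hP.2 (hxp ▸ hx)).2
  · exact subset_convexHull ℝ _ (hP.1 ⟨hx, hxp⟩)

lemma config_union_finite {d : ℕ} {σ F : Set (Euc d)} (hc : IsConfiguration σ)
    (hF : F.Finite) : IsConfiguration (σ ∪ F) := by
  refine ⟨hc.1.union hF.countable, fun δ hδ => ?_⟩
  refine ((hc.2 δ hδ).union hF).subset ?_
  rintro x ⟨hx | hx, hδx⟩
  · exact Or.inl ⟨hx, hδx⟩
  · exact Or.inr hx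

lemma finRemove {d : ℕ} (σ : Set (Euc d)) (hcσ : IsConfiguration σ)
    (h0 : ∀ j, (0 : Euc d) ∈ interior (convexHull ℝ (peelSet σ j))) :
    ∀ F : Set (Euc d), F.Finite → ∀ k, peelHull (σ ∪ F) (k + F.ncard) ⊆ peelHull σ k := by
  intro F hF
  refine Set.Finite.induction_on F hF ?_ ?_
  · intro k
    simpa using subset_rfl
  · intro a s ha hs ih k
    have hn : (insert a s).ncard = s.ncard + 1 := Set.ncard_insert_of_notMem ha hs
    rw [hn, Set.union_insert, ← add_assoc]
    exact (stepHull (σ ∪ s) a (config_union_finite hcσ hs)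
      (fun j => interior_mono (convexHull_mono (peelSet_mono Set.subset_union_left j)) (h0 j))
      (k + s.ncard)).trans (ih k)

/-- sandwich lemma for peeling after removing `m` points. -/
theorem peelHull_sandwich {d : ℕ} (ς ς' : Set (Euc d))
    (hς : IsConfiguration ς) (hς' : IsConfiguration ς')
    (hgp : GeneralPosition ς) (hgp' : GeneralPosition ς')
    (hnu : NonUnilateral ς) (hnu' : NonUnilateral ς')
    (hsub : ς' ⊆ ς) (m : ℕ) (hfin : (ς \ ς').Finite) (hm : (ς \ ς').ncard = m) :
    ∀ k : ℕ, peelHull ς (k + m) ⊆ peelHull ς' k ∧ peelHull ς' k ⊆ peelHull ς k := by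
  intro k
  constructor
  · have h0 : ∀ j, (0 : Euc d) ∈ interior (convexHull ℝ (peelSet ς' j)) := fun j => hnu' j
    have h := finRemove ς' hς' h0 (ς \ ς') hfin k
    rw [Set.union_diff_cancel hsub, hm] at h
    exact h
  · exact convexHull_mono (peelSet_mono hsub k)

end
end

section
/- Let ς and ς′ be non-unilateral configurations in ℝ^d with no d+1 points on a common hyperplane, such that ς = ς′ ∪ {a} for a single point a ∉ ς′ with a ∉ C₁(ς′). Then a lies on the boundary of C₁(ς), the interior points of ς are contained in ς′, and C₂(ς′) ⊆ C₁(ς) while C₁(ς′) ⊆ C₁(ς). -/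
open Set MeasureTheory Filter Topology ProbabilityTheory Pointwise

noncomputable section

/-- removing a single point `a` outside `C₁(ς')`. -/
theorem peelHull_single_point {d : ℕ} (ς ς' : Set (Euc d)) (a : Euc d)
    (hς : IsConfiguration ς) (hς' : IsConfiguration ς')
    (hgp : GeneralPosition ς) (hgp' : GeneralPosition ς')
    (hnu : NonUnilateral ς) (hnu' : NonUnilateral ς')
    (heq : ς = ς' ∪ {a}) (ha : a ∉ ς') (haC : a ∉ peelHull ς' 0) :
    a ∈ frontier (peelHull ς 0) ∧
    {x ∈ ς | x ∉ frontier (peelHull ς 0)} ⊆ ς' ∧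
    peelHull ς' 1 ⊆ peelHull ς 0 ∧
    peelHull ς' 0 ⊆ peelHull ς 0 := by
  -- basic facts
  have hss : ς' ⊆ ς := by rw [heq]; exact Set.subset_union_left
  have haς : a ∈ ς := by rw [heq]; exact Set.mem_union_right _ rfl
  have hK0 : peelHull ς 0 = convexHull ℝ ς := rfl
  have hK0' : peelHull ς' 0 = convexHull ℝ ς' := rfl
  have haC' : a ∉ convexHull ℝ ς' := by rw [← hK0']; exact haC
  have hne' : (convexHull ℝ ς').Nonempty := ⟨0, interior_subset (hnu' 0)⟩
  have hne'' : ς'.Nonempty := convexHull_nonempty_iff.mp hne'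
  -- the key: a is not in the interior of convexHull ς
  have hKeq : convexHull ℝ ς = ⋃ z ∈ convexHull ℝ ς', segment ℝ a z := by
    rw [heq, Set.union_singleton, convexHull_insert hne'']; simp [convexJoin]
  have hnotint : a ∉ interior (peelHull ς 0) := by
    intro hint
    rw [hK0] at hint
    rcases Metric.mem_nhds_iff.mp (mem_interior_iff_mem_nhds.mp hint) with ⟨ε, hε, hball⟩
    obtain ⟨x₀, hx₀⟩ := hne'
    have hvx : a - x₀ ≠ 0 := sub_ne_zero.mpr (fun h => haC' (h ▸ hx₀))
    have hv : (0:ℝ) < ‖a - x₀‖ := norm_pos_iff.mpr hvx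
    set t : ℝ := ε / (2 * ‖a - x₀‖) with ht_def
    have ht : 0 < t := div_pos hε (by positivity)
    have hb : a + t • (a - x₀) ∈ convexHull ℝ ς := by
      apply hball
      simp only [Metric.mem_ball, dist_eq_norm]
      have : ‖a + t • (a - x₀) - a‖ = t * ‖a - x₀‖ := by
        rw [add_sub_cancel_left, norm_smul, Real.norm_of_nonneg ht.le]
      rw [this, ht_def, div_mul_eq_mul_div, mul_comm 2 ‖a - x₀‖, ← div_div,
        mul_div_assoc, div_self hv.ne']
      linarith
    rw [hKeq] at hb
    simp only [Set.mem_iUnion] at hb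
    obtain ⟨z, hz, hseg⟩ := hb
    obtain ⟨p, q, hp, hq, hpq, habz⟩ := hseg
    -- habz : p • a + q • z = a + t • (a - x₀)
    have hkey : (t + q) • a = t • x₀ + q • z := by
      have hp1 : p = 1 - q := by linarith
      rw [hp1] at habz
      have := habz
      rw [sub_smul, one_smul, smul_sub] at this
      -- this : a - q • a + q • z = a + (t • a - t • x₀)
      have h2 : q • z - q • a = t • a - t • x₀ := by
        have := congrArg (fun w => w - a) this
        simp only [add_sub_cancel_left] at this
        linear_combination (norm := abel) this
      rw [add_smul]
      linear_combination (norm := abel) -h2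
    have hs : (0:ℝ) < t + q := by linarith
    have haconv : a ∈ convexHull ℝ ς' := by
      have : a = ((t + q)⁻¹ * t) • x₀ + ((t + q)⁻¹ * q) • z := by
        have := congrArg (fun w => (t + q)⁻¹ • w) hkey
        simp only [smul_smul, inv_mul_cancel₀ hs.ne', one_smul, smul_add] at this
        rw [← this]
      rw [this]
      exact (convex_convexHull ℝ ς') hx₀ hz
        (by positivity) (by positivity)
        (by field_simp)
    exact haC' haconv
  have hfront : a ∈ frontier (peelHull ς 0) := by
    constructor
    · exact subset_closure (subset_convexHull ℝ ς haς)
    · exact hnotint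
  refine ⟨hfront, ?_, ?_, ?_⟩
  · intro x hx
    rcases hx with ⟨hxς, hxf⟩
    rw [heq] at hxς
    rcases hxς with h | h
    · exact h
    · exact absurd (h ▸ hfront) hxf
  · exact convexHull_mono (fun x hx => hss hx.1)
  · exact convexHull_mono hss


end
end

section
/- Suppose the spectral measure ν is supported on d+1 unit vectors e⁽¹⁾,…,e⁽^{d+1}⁾ whose positive cone is ℝ^d, with masses ν₁,…,ν_{d+1}. Let π be the Poisson point process with intensity θ × ν, and let x_k⁽ⁱ⁾ be the k-th largest point of π on the ray through e⁽ⁱ⁾. Then the k-th peeled convex hull C_k of π is the simplex with vertices x_k⁽¹⁾, …, x_k⁽^{d+1}⁾, and setting ρ_n = max_{x∈C_n}|x|, the rescaled hulls ρ_n^{−1} C_n converge in Hausdorff distance almost surely to the simplex with vertices (t_i/t⁺) e⁽ⁱ⁾, where t_i = ν_i^{1/α} and t⁺ = max_i t_i. -/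
open Set MeasureTheory Filter Topology ProbabilityTheory Pointwise

noncomputable section

/- ### Auxiliary lemmas ### -/


/-- membership in convex hull of a finite family -/
lemma fin_mem_convexHull_iff {E : Type*} [AddCommGroup E] [Module ℝ E] {l : ℕ}
    (v : Fin l → E) (x : E) :
    x ∈ convexHull ℝ (Set.range v) ↔
      ∃ w : Fin l → ℝ, (∀ i, 0 ≤ w i) ∧ ∑ i, w i = 1 ∧ ∑ i, w i • v i = x := by
  rw [convexHull_range_eq_exists_affineCombination]
  constructor
  · rintro ⟨s, w, h0, h1, rfl⟩
    classical
    refine ⟨fun i => if i ∈ s then w i else 0, fun i => by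
      by_cases hi : i ∈ s
      · simpa [hi] using h0 i hi
      · simp [hi], ?_, ?_⟩
    · rw [Finset.sum_ite_mem, Finset.univ_inter, h1]
    · rw [affineCombination_eq_centerMass h1, Finset.centerMass_eq_of_sum_1 _ _ h1]
      rw [← Finset.sum_subset (Finset.subset_univ s)]
      · exact Finset.sum_congr rfl fun i hi => by simp [hi]
      · intro i _ hi; simp [hi]
  · rintro ⟨w, h0, h1, rfl⟩
    exact ⟨Finset.univ, w, fun i _ => h0 i, h1, by
      rw [affineCombination_eq_centerMass h1, Finset.centerMass_eq_of_sum_1 _ _ h1]⟩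

lemma norm_le_of_mem_hull {d l : ℕ} {v : Fin (l+1) → Euc d} {x : Euc d}
    (hx : x ∈ convexHull ℝ (Set.range v)) : ‖x‖ ≤ ⨆ i, ‖v i‖ := by
  obtain ⟨w, h0, h1, rfl⟩ := (fin_mem_convexHull_iff v x).mp hx
  calc ‖∑ i, w i • v i‖ ≤ ∑ i, ‖w i • v i‖ := norm_sum_le _ _
    _ ≤ ∑ i, w i * (⨆ j, ‖v j‖) := by
        refine Finset.sum_le_sum fun i _ => ?_
        rw [norm_smul, Real.norm_eq_abs, abs_of_nonneg (h0 i)]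
        exact mul_le_mul_of_nonneg_left (le_ciSup (f := fun j => ‖v j‖) (Set.Finite.bddAbove (Set.finite_range _)) i)
          (h0 i)
    _ = ⨆ j, ‖v j‖ := by rw [← Finset.sum_mul, h1, one_mul]


lemma maxNorm_hull {d l : ℕ} (v : Fin (l+1) → Euc d) :
    maxNorm (convexHull ℝ (Set.range v)) = ⨆ i, ‖v i‖ := by
  obtain ⟨i0, hi0⟩ := Finite.exists_max fun i => ‖v i‖
  have hsup : (⨆ i, ‖v i‖) = ‖v i0‖ :=
    le_antisymm (ciSup_le hi0) (le_ciSup (f := fun j => ‖v j‖) (Set.Finite.bddAbove (Set.finite_range _)) i0)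
  refine IsGreatest.csSup_eq ⟨⟨v i0, subset_convexHull ℝ _ ⟨i0, rfl⟩, hsup.symm⟩, ?_⟩
  rintro y ⟨x, hx, rfl⟩
  exact norm_le_of_mem_hull hx

lemma hausdorffDist_hull_le {d l : ℕ} (u w : Fin (l+1) → Euc d) :
    Metric.hausdorffDist (convexHull ℝ (Set.range u)) (convexHull ℝ (Set.range w)) ≤
      ∑ i, dist (u i) (w i) := by
  have hr : (0:ℝ) ≤ ∑ i, dist (u i) (w i) := Finset.sum_nonneg fun i _ => dist_nonneg
  have key : ∀ u w : Fin (l+1) → Euc d, ∀ x ∈ convexHull ℝ (Set.range u),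
      ∃ y ∈ convexHull ℝ (Set.range w), dist x y ≤ ∑ i, dist (u i) (w i) := by
    intro u w x hx
    obtain ⟨c, h0, h1, rfl⟩ := (fin_mem_convexHull_iff u x).mp hx
    refine ⟨∑ i, c i • w i, (fin_mem_convexHull_iff w _).mpr ⟨c, h0, h1, rfl⟩, ?_⟩
    rw [dist_eq_norm, ← Finset.sum_sub_distrib]
    calc ‖∑ i, (c i • u i - c i • w i)‖ ≤ ∑ i, ‖c i • u i - c i • w i‖ := norm_sum_le _ _
      _ ≤ ∑ i, dist (u i) (w i) := by
          refine Finset.sum_le_sum fun i _ => ?_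
          rw [← smul_sub, norm_smul, Real.norm_eq_abs, abs_of_nonneg (h0 i), dist_eq_norm]
          have hc1 : c i ≤ 1 := h1 ▸ Finset.single_le_sum (fun j _ => h0 j) (Finset.mem_univ i)
          calc c i * ‖u i - w i‖ ≤ 1 * ‖u i - w i‖ :=
                mul_le_mul_of_nonneg_right hc1 (norm_nonneg _)
            _ = ‖u i - w i‖ := one_mul _
  refine Metric.hausdorffDist_le_of_mem_dist hr (key u w) ?_
  intro y hy
  obtain ⟨x, hx, hd⟩ := key w u y hy
  refine ⟨x, hx, ?_⟩
  calc dist y x ≤ ∑ i, dist (w i) (u i) := hd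
    _ = ∑ i, dist (u i) (w i) := Finset.sum_congr rfl fun i _ => dist_comm _ _

lemma tendsto_fin_iSup {l : ℕ} (f : ℕ → Fin (l+1) → ℝ) (L : Fin (l+1) → ℝ)
    (h : ∀ i, Tendsto (f · i) atTop (𝓝 (L i))) :
    Tendsto (fun n => ⨆ i, f n i) atTop (𝓝 (⨆ i, L i)) := by
  have hb : ∀ g q : Fin (l+1) → ℝ, (⨆ i, g i) ≤ (⨆ i, q i) + ∑ i, |g i - q i| := by
    intro g q
    refine ciSup_le fun i => ?_
    calc g i ≤ q i + |g i - q i| := by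
          have := le_abs_self (g i - q i); linarith
      _ ≤ (⨆ j, q j) + ∑ j, |g j - q j| :=
          add_le_add (le_ciSup (f := q) (Set.Finite.bddAbove (Set.finite_range _)) i)
            (Finset.single_le_sum (f := fun j => |g j - q j|) (fun j _ => abs_nonneg _)
              (Finset.mem_univ i))
  have key : ∀ n, |(⨆ i, f n i) - ⨆ i, L i| ≤ ∑ i, |f n i - L i| := by
    intro n
    rw [abs_sub_le_iff]
    constructor
    · have := hb (f n) L; linarith
    · have := hb L (f n)
      have he : ∑ i, |L i - f n i| = ∑ i, |f n i - L i| :=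
        Finset.sum_congr rfl fun i _ => abs_sub_comm _ _
      linarith
  have hsum : Tendsto (fun n => ∑ i, |f n i - L i|) atTop (𝓝 0) := by
    have : Tendsto (fun n => ∑ i : Fin (l+1), |f n i - L i|) atTop (𝓝 (∑ i : Fin (l+1), (0:ℝ))) := by
      refine tendsto_finset_sum _ fun i _ => ?_
      have h2 : Tendsto (fun n => |f n i - L i|) atTop (𝓝 |L i - L i|) :=
        ((h i).sub (tendsto_const_nhds (x := L i))).abs
      simpa using h2
    simpa using this
  have habs : Tendsto (fun n => |(⨆ i, f n i) - ⨆ i, L i|) atTop (𝓝 0) :=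
    squeeze_zero (fun n => abs_nonneg _) key hsum
  rw [← tendsto_sub_nhds_zero_iff]
  exact (tendsto_zero_iff_abs_tendsto_zero _).mpr habs

lemma fin_iSup_mul {l : ℕ} (f : Fin (l+1) → ℝ) {C : ℝ} (hC : 0 ≤ C) :
    (⨆ i, f i) * C = ⨆ i, f i * C := by
  obtain ⟨i0, hi0⟩ := Finite.exists_max f
  have h1 : (⨆ i, f i) = f i0 :=
    le_antisymm (ciSup_le hi0) (le_ciSup (f := f) (Set.Finite.bddAbove (Set.finite_range _)) i0)
  rw [h1]
  refine le_antisymm (le_ciSup (f := fun i => f i * C) (Set.Finite.bddAbove (Set.finite_range _)) i0)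
    (ciSup_le fun i => mul_le_mul_of_nonneg_right (hi0 i) hC)




lemma gammaPDFReal_one_one (x : ℝ) :
    gammaPDFReal 1 1 x = if 0 ≤ x then Real.exp (-x) else 0 := by
  unfold gammaPDFReal
  split <;> simp [Real.Gamma_one, Real.rpow_zero]

lemma expMeasure_Iic_zero : expMeasure 1 (Iic (0:ℝ)) = 0 := by
  rw [expMeasure, gammaMeasure, withDensity_apply _ measurableSet_Iic,
    Measure.restrict_congr_set Iio_ae_eq_Iic.symm]
  exact lintegral_gammaPDF_of_nonpos le_rfl

lemma expMeasure_ae_pos : ∀ᵐ x ∂(expMeasure 1), 0 < x := by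
  rw [ae_iff]
  have : {x : ℝ | ¬ 0 < x} = Iic 0 := by ext x; simp
  rw [this]
  exact expMeasure_Iic_zero

lemma integrable_id_expMeasure : Integrable (fun x : ℝ => x) (expMeasure 1) := by
  rw [expMeasure, gammaMeasure]
  have hpdf : gammaPDF 1 1 = fun x => ENNReal.ofReal (gammaPDFReal 1 1 x) := rfl
  rw [hpdf, integrable_withDensity_iff ((measurable_gammaPDFReal 1 1).ennreal_ofReal)
      (ae_of_all _ fun x => ENNReal.ofReal_lt_top)]
  have heq : (fun x : ℝ => x * (ENNReal.ofReal (gammaPDFReal 1 1 x)).toReal) =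
      (Ici (0:ℝ)).indicator (fun x => x * Real.exp (-x)) := by
    ext x
    rw [ENNReal.toReal_ofReal (gammaPDFReal_nonneg zero_lt_one zero_lt_one x),
      gammaPDFReal_one_one]
    by_cases hx : 0 ≤ x <;> simp [hx, indicator]
  rw [heq, integrable_indicator_iff measurableSet_Ici]
  rw [integrableOn_Ici_iff_integrableOn_Ioi]
  have := Real.GammaIntegral_convergent (s := 2) (by norm_num)
  refine this.congr_fun (fun x hx => ?_) measurableSet_Ioi
  show Real.exp (-x) * x ^ ((2:ℝ) - 1) = x * Real.exp (-x)
  rw [show (2:ℝ) - 1 = 1 by norm_num, Real.rpow_one, mul_comm]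

lemma expMean_pos : 0 < ∫ x, x ∂(expMeasure 1) := by
  have : IsProbabilityMeasure (expMeasure 1) := isProbabilityMeasure_expMeasure one_pos
  rw [integral_pos_iff_support_of_nonneg_ae
    (expMeasure_ae_pos.mono fun x hx => le_of_lt hx) integrable_id_expMeasure]
  have hsub : Ioi (0:ℝ) ⊆ Function.support (fun x : ℝ => x) := fun x hx => ne_of_gt hx
  have hIoi : 0 < expMeasure 1 (Ioi (0:ℝ)) := by
    by_contra h
    push_neg at h
    have h0 : expMeasure 1 (Ioi (0:ℝ)) = 0 := le_antisymm h zero_le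
    have huniv : expMeasure 1 (univ : Set ℝ) = 0 := by
      rw [← Iic_union_Ioi (a := (0:ℝ))]
      exact measure_union_null expMeasure_Iic_zero h0
    simp [measure_univ] at huniv
  exact lt_of_lt_of_le hIoi (measure_mono hsub)



section Geometry

variable {d : ℕ} {e : Fin (d+1) → Euc d}

lemma span_top (hcone : posCone e = univ) : Submodule.span ℝ (Set.range e) = ⊤ := by
  rw [eq_top_iff]
  intro x _
  have hx : x ∈ posCone e := hcone ▸ mem_univ x
  obtain ⟨c, -, rfl⟩ := hx
  exact Submodule.sum_mem _ fun i _ => Submodule.smul_mem _ _ (Submodule.subset_span ⟨i, rfl⟩)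

lemma exists_pos_combo (hcone : posCone e = univ) :
    ∃ c : Fin (d+1) → ℝ, (∀ i, 0 < c i) ∧ ∑ i, c i • e i = 0 := by
  have h : ∀ i : Fin (d+1), ∃ c : Fin (d+1) → ℝ, (∀ j, 0 ≤ c j) ∧ -(e i) = ∑ j, c j • e j :=
    fun i => (hcone ▸ mem_univ (-(e i)) : -(e i) ∈ posCone e)
  choose c hc0 hce using h
  refine ⟨fun j => 1 + ∑ i, c i j, fun j => by
    have := Finset.sum_nonneg (fun i (_ : i ∈ Finset.univ) => hc0 i j)
    show (0:ℝ) < 1 + ∑ i, c i j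
    linarith, ?_⟩
  have h2 : ∑ i, ∑ j, c i j • e j = ∑ i, -(e i) :=
    Finset.sum_congr rfl fun i _ => (hce i).symm
  calc ∑ j, (1 + ∑ i, c i j) • e j
      = ∑ j, (e j + ∑ i, c i j • e j) :=
        Finset.sum_congr rfl fun j _ => by rw [add_smul, one_smul, Finset.sum_smul]
    _ = ∑ j, e j + ∑ j, ∑ i, c i j • e j := Finset.sum_add_distrib
    _ = ∑ j, e j + ∑ i, ∑ j, c i j • e j := by rw [Finset.sum_comm]
    _ = ∑ j, e j + ∑ i, -(e i) := by rw [h2]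
    _ = 0 := by rw [Finset.sum_neg_distrib, add_neg_cancel]

lemma zero_convex_combo (hcone : posCone e = univ) {b : Fin (d+1) → ℝ} (hb : ∀ i, 0 < b i) :
    ∃ w : Fin (d+1) → ℝ, (∀ i, 0 < w i) ∧ ∑ i, w i = 1 ∧ ∑ i, w i • (b i • e i) = 0 := by
  obtain ⟨c, hc, hc0⟩ := exists_pos_combo hcone
  set T : ℝ := ∑ i, c i / b i with hT
  have hTpos : 0 < T := Finset.sum_pos (fun i _ => div_pos (hc i) (hb i)) Finset.univ_nonempty
  refine ⟨fun i => (c i / b i) / T, fun i => div_pos (div_pos (hc i) (hb i)) hTpos, ?_, ?_⟩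
  · rw [← Finset.sum_div, ← hT, div_self hTpos.ne']
  · have : ∀ i : Fin (d+1), ((c i / b i) / T) • (b i • e i) = T⁻¹ • (c i • e i) := by
      intro i
      rw [smul_smul, smul_smul]
      congr 1
      field_simp
      rw [mul_div_assoc, div_self (hb i).ne', mul_one]
    simp_rw [this, ← Finset.smul_sum, hc0, smul_zero]

lemma exists_affineBasis (hcone : posCone e = univ) {b : Fin (d+1) → ℝ} (hb : ∀ i, 0 < b i) :
    ∃ B : AffineBasis (Fin (d+1)) ℝ (Euc d), ⇑B = fun i => b i • e i := by
  set v : Fin (d+1) → Euc d := fun i => b i • e i with hv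
  obtain ⟨w, hw, hw1, hw0⟩ := zero_convex_combo hcone hb
  have hspan : Submodule.span ℝ (Set.range v) = ⊤ := by
    rw [eq_top_iff, ← span_top hcone, Submodule.span_le]
    rintro x ⟨i, rfl⟩
    have : e i = (b i)⁻¹ • v i := by rw [hv]; rw [smul_smul, inv_mul_cancel₀ (hb i).ne', one_smul]
    rw [this]
    exact Submodule.smul_mem _ _ (Submodule.subset_span ⟨i, rfl⟩)
  have hvs : vectorSpan ℝ (Set.range v) = ⊤ := by
    rw [eq_top_iff, ← hspan, Submodule.span_le]
    rintro x ⟨j, rfl⟩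
    have : v j = ∑ i, w i • (v j - v i) := by
      simp_rw [smul_sub]
      rw [Finset.sum_sub_distrib, ← Finset.sum_smul, hw1, one_smul, hw0, sub_zero]
    rw [this]
    exact Submodule.sum_mem _ fun i _ =>
      Submodule.smul_mem _ _ (vsub_mem_vectorSpan ℝ ⟨j, rfl⟩ ⟨i, rfl⟩)
  have hind : AffineIndependent ℝ v := by
    rw [affineIndependent_iff_finrank_vectorSpan_eq ℝ v (Fintype.card_fin _)]
    rw [hvs]
    simp [finrank_euclideanSpace_fin]
  have htot : affineSpan ℝ (Set.range v) = ⊤ := by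
    rw [eq_top_iff]
    intro x _
    have h0mem : (0 : Euc d) ∈ affineSpan ℝ (Set.range v) := by
      apply convexHull_subset_affineSpan
      exact (fin_mem_convexHull_iff v 0).mpr ⟨w, fun i => (hw i).le, hw1, hw0⟩
    have := AffineSubspace.vadd_mem_of_mem_direction
      (show x ∈ (affineSpan ℝ (Set.range v)).direction by
        rw [direction_affineSpan, hvs]; trivial) h0mem
    simpa using this
  exact ⟨⟨v, hind, htot⟩, rfl⟩

end Geometry

section Peeling

variable {d : ℕ} {e : Fin (d+1) → Euc d}

lemma zero_mem_interior_simplex (hcone : posCone e = univ) {b : Fin (d+1) → ℝ}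
    (hb : ∀ i, 0 < b i) :
    (0 : Euc d) ∈ interior (convexHull ℝ (Set.range fun i => b i • e i)) := by
  obtain ⟨B, hB⟩ := exists_affineBasis hcone hb
  obtain ⟨w, hw, hw1, hw0⟩ := zero_convex_combo hcone hb
  rw [← hB, B.interior_convexHull]
  have h0 : Finset.univ.affineCombination ℝ (⇑B) w = 0 := by
    rw [affineCombination_eq_centerMass hw1, Finset.centerMass_eq_of_sum_1 _ _ hw1]
    simp only [hB]
    exact hw0
  intro i
  rw [← h0, B.coord_apply_combination_of_mem (Finset.mem_univ i) hw1]
  exact hw i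

lemma vertex_not_mem_interior (hd : 0 < d) (hcone : posCone e = univ) {b : Fin (d+1) → ℝ}
    (hb : ∀ i, 0 < b i) (i : Fin (d+1)) :
    b i • e i ∉ interior (convexHull ℝ (Set.range fun i => b i • e i)) := by
  obtain ⟨B, hB⟩ := exists_affineBasis hcone hb
  rw [← hB, B.interior_convexHull]
  have : Nontrivial (Fin (d+1)) := Fin.nontrivial_iff_two_le.mpr (by omega)
  obtain ⟨j, hj⟩ := exists_ne i
  intro hmem
  have h := hmem j
  have hBi : B i = b i • e i := congrFun hB i
  rw [← hBi, B.coord_apply, if_neg hj] at h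
  exact lt_irrefl 0 h

lemma hull_tail_eq (hcone : posCone e = univ) (a : ℕ → Fin (d+1) → ℝ)
    (hpos : ∀ n i, 0 < a n i) (hanti : ∀ i k m, k < m → a m i < a k i) (k : ℕ) :
    convexHull ℝ (⋃ i, Set.range fun m => a (m + k) i • e i)
      = convexHull ℝ (Set.range fun i => a k i • e i) := by
  apply Subset.antisymm
  · apply convexHull_min _ (convex_convexHull ℝ _)
    rintro x hx
    rw [mem_iUnion] at hx
    obtain ⟨i, m, rfl⟩ := hx
    have h0 : (0:Euc d) ∈ convexHull ℝ (Set.range fun i => a k i • e i) :=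
      interior_subset (zero_mem_interior_simplex hcone (fun i => hpos k i))
    have hv : a k i • e i ∈ convexHull ℝ (Set.range fun i => a k i • e i) :=
      subset_convexHull _ _ ⟨i, rfl⟩
    have hle : a (m+k) i ≤ a k i := by
      rcases Nat.eq_zero_or_pos m with h|h
      · subst h; simp
      · exact (hanti i k (m+k) (by omega)).le
    set r : ℝ := a (m+k) i / a k i with hrdef
    have hr0 : 0 < r := div_pos (hpos _ i) (hpos k i)
    have hr1 : r ≤ 1 := (div_le_one (hpos k i)).mpr hle
    have hmem := (convex_convexHull ℝ (Set.range fun i => a k i • e i)) h0 hv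
      (by linarith : (0:ℝ) ≤ 1 - r) hr0.le (by ring)
    have heq : (1-r) • (0:Euc d) + r • (a k i • e i) = a (m+k) i • e i := by
      rw [smul_zero, zero_add, smul_smul, hrdef, div_mul_cancel₀ _ (hpos k i).ne']
    rwa [heq] at hmem
  · apply convexHull_mono
    rintro x ⟨i, rfl⟩
    exact mem_iUnion.mpr ⟨i, 0, by simp⟩

lemma peelSet_eq (hd : 0 < d) (hcone : posCone e = univ) (a : ℕ → Fin (d+1) → ℝ)
    (hpos : ∀ n i, 0 < a n i) (hanti : ∀ i k m, k < m → a m i < a k i) (k : ℕ) :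
    peelSet (⋃ i, Set.range fun m => a m i • e i) k
      = ⋃ i, Set.range fun m => a (m + k) i • e i := by
  induction k with
  | zero => rfl
  | succ k IH =>
    have hstep : peelSet (⋃ i, Set.range fun m => a m i • e i) (k+1)
        = {x ∈ peelSet (⋃ i, Set.range fun m => a m i • e i) k |
            x ∉ frontier (convexHull ℝ (peelSet (⋃ i, Set.range fun m => a m i • e i) k))} := rfl
    rw [hstep, IH, hull_tail_eq hcone a hpos hanti k]
    have hcl : IsClosed (convexHull ℝ (Set.range fun i => a k i • e i)) :=
      (Set.Finite.isCompact_convexHull ℝ (finite_range _)).isClosed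
    have hfr := hcl.frontier_eq
    have h0 : (0:Euc d) ∈ interior (convexHull ℝ (Set.range fun i => a k i • e i)) :=
      zero_mem_interior_simplex hcone (fun i => hpos k i)
    ext x
    simp only [mem_setOf_eq, mem_iUnion, mem_range]
    constructor
    · rintro ⟨⟨i, m, rfl⟩, hxF⟩
      cases m with
      | zero =>
        exfalso
        apply hxF
        rw [hfr, zero_add]
        exact ⟨subset_convexHull _ _ ⟨i, rfl⟩,
          vertex_not_mem_interior hd hcone (fun i => hpos k i) i⟩
      | succ m => exact ⟨i, m, by rw [show m + (k+1) = m + 1 + k by omega]⟩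
    · rintro ⟨i, m, rfl⟩
      refine ⟨⟨i, m+1, by rw [show m + 1 + k = m + (k+1) by omega]⟩, ?_⟩
      set r : ℝ := a (m + (k+1)) i / a k i with hrdef
      have hlt : a (m+(k+1)) i < a k i := hanti i k _ (by omega)
      have hr0 : 0 < r := div_pos (hpos _ i) (hpos k i)
      have hr1 : r < 1 := (div_lt_one (hpos k i)).mpr hlt
      have hmem := (convex_convexHull ℝ
          (Set.range fun i => a k i • e i)).combo_interior_closure_mem_interior h0
          (subset_closure (subset_convexHull _ _ ⟨i, rfl⟩))
          (by linarith : (0:ℝ) < 1 - r) hr0.le (by ring)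
      have heq : (1-r) • (0:Euc d) + r • (a k i • e i) = a (m+(k+1)) i • e i := by
        rw [smul_zero, zero_add, smul_smul, hrdef, div_mul_cancel₀ _ (hpos k i).ne']
      rw [heq] at hmem
      rw [hfr]
      rintro ⟨-, hni⟩
      exact hni hmem

lemma peelHull_eq (hd : 0 < d) (hcone : posCone e = univ) (a : ℕ → Fin (d+1) → ℝ)
    (hpos : ∀ n i, 0 < a n i) (hanti : ∀ i k m, k < m → a m i < a k i) (k : ℕ) :
    peelHull (⋃ i, Set.range fun m => a m i • e i) k
      = convexHull ℝ (Set.range fun i => a k i • e i) := by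
  rw [peelHull, peelSet_eq hd hcone a hpos hanti k, hull_tail_eq hcone a hpos hanti k]

end Peeling


/-- with `d+1` atoms whose cone is `ℝ^d`, every peel is the simplex with
vertices the current largest points on the rays, and the rescaled peels converge to the
simplex with vertices `(t_i/t⁺) e_i`. -/
theorem simplex_limit_shape {d : ℕ} {Ω : Type*} [MeasurableSpace Ω]
    (P : Measure Ω) [IsProbabilityMeasure P] (α : ℝ) (hα : 0 < α)
    (e : Fin (d+1) → Euc d) (he : ∀ i, ‖e i‖ = 1) (hcone : posCone e = Set.univ)
    (ν : Fin (d+1) → ℝ) (hν : ∀ i, 0 < ν i) (hsum : ∑ i, ν i = 1)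
    (γ : Fin (d+1) → ℕ → Ω → ℝ)
    (hind : iIndepFun
      (fun (p : Fin (d+1) × ℕ) ω => γ p.1 p.2 ω) P)
    (hlaw : ∀ i k, Measure.map (γ i k) P = expMeasure 1) :
    ∀ᵐ ω ∂P,
      (∀ k : ℕ, peelHull (rayConfig α ν e γ ω) k =
        convexHull ℝ (Set.range fun i : Fin (d+1) =>
          ((ν i) ^ (1/α) * (∑ j ∈ Finset.range (k+1), γ i j ω) ^ (-(1/α))) • e i)) ∧
      Tendsto (fun n : ℕ =>
        Metric.hausdorffDist
          ((maxNorm (peelHull (rayConfig α ν e γ ω) n))⁻¹ • peelHull (rayConfig α ν e γ ω) n)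
          (convexHull ℝ (Set.range fun i : Fin (d+1) =>
            ((ν i) ^ (1/α) / ⨆ j : Fin (d+1), (ν j) ^ (1/α)) • e i)))
        atTop (nhds 0) := by
  rcases Nat.eq_zero_or_pos d with hd0 | hd
  · exfalso
    subst hd0
    have h := he 0
    have h0 : e 0 = 0 := Subsingleton.elim _ _
    rw [h0, norm_zero] at h
    exact one_ne_zero h.symm
  -- measurability
  have hPexp : IsProbabilityMeasure (expMeasure 1) := isProbabilityMeasure_expMeasure one_pos
  have haem : ∀ i k, AEMeasurable (γ i k) P := by
    intro i k
    by_contra hn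
    have hmap := Measure.map_of_not_aemeasurable (f := γ i k) (μ := P) hn
    rw [hlaw i k] at hmap
    have h1 := hPexp.measure_univ
    rw [hmap] at h1
    simp at h1
  -- a.s. positivity
  have hpos_ae : ∀ᵐ ω ∂P, ∀ i k, 0 < γ i k ω := by
    rw [ae_all_iff]
    intro i
    rw [ae_all_iff]
    intro k
    have hmap := Measure.map_apply_of_aemeasurable (haem i k) (measurableSet_Iic (a := (0:ℝ)))
    rw [hlaw i k, expMeasure_Iic_zero] at hmap
    rw [ae_iff]
    have hset : {ω | ¬ 0 < γ i k ω} = γ i k ⁻¹' (Set.Iic 0) := by ext ω; simp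
    rw [hset, ← hmap]
  -- SLLN
  set m : ℝ := ∫ x, x ∂(expMeasure 1) with hm
  have hm_pos : 0 < m := expMean_pos
  have hident : ∀ i k, IdentDistrib (γ i k) (γ i 0) P P := fun i k =>
    ⟨haem i k, haem i 0, by rw [hlaw, hlaw]⟩
  have hmean : ∀ i, ∫ ω, γ i 0 ω ∂P = m := by
    intro i
    rw [hm, ← hlaw i 0]
    exact (integral_map (haem i 0) aestronglyMeasurable_id).symm
  have hint : ∀ i, Integrable (γ i 0) P := by
    intro i
    have h1 : Integrable (fun x : ℝ => x) (Measure.map (γ i 0) P) := by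
      rw [hlaw]; exact integrable_id_expMeasure
    exact (integrable_map_measure aestronglyMeasurable_id (haem i 0)).mp h1
  have hslln : ∀ᵐ ω ∂P, ∀ i,
      Tendsto (fun n : ℕ => (∑ j ∈ Finset.range n, γ i j ω) / n) atTop (𝓝 m) := by
    rw [ae_all_iff]
    intro i
    have hindep : Pairwise (Function.onFun (IndepFun · · P) (γ i)) := by
      intro k l hkl
      exact hind.indepFun (show ((i,k) : Fin (d+1) × ℕ) ≠ (i,l) by simp [hkl])
    have h1 := strong_law_ae_real (γ i) (hint i) hindep (fun k => hident i k)
    rw [show P[γ i 0] = m from hmean i] at h1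
    exact h1
  filter_upwards [hpos_ae, hslln] with ω hω1 hω2
  -- deterministic part
  set t : Fin (d+1) → ℝ := fun i => (ν i) ^ (1/α : ℝ) with ht
  have htpos : ∀ i, 0 < t i := fun i => Real.rpow_pos_of_pos (hν i) _
  set S : ℕ → Fin (d+1) → ℝ := fun n i => ∑ j ∈ Finset.range (n+1), γ i j ω with hS
  have hSpos : ∀ n i, 0 < S n i := fun n i =>
    Finset.sum_pos (fun j _ => hω1 i j) (by simp)
  have hSmono : ∀ i k n, k < n → S k i < S n i := by
    intro i k n hkn
    refine Finset.sum_lt_sum_of_subset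
      (Finset.range_subset_range.mpr (by omega))
      (i := k+1) (Finset.mem_range.mpr (by omega))
      (by simp) (hω1 i (k+1)) (fun j _ _ => (hω1 i j).le)
  set a : ℕ → Fin (d+1) → ℝ := fun n i => t i * (S n i) ^ (-(1/α) : ℝ) with haa
  have hapos : ∀ n i, 0 < a n i := fun n i =>
    mul_pos (htpos i) (Real.rpow_pos_of_pos (hSpos n i) _)
  have hexp_neg : -(1/α : ℝ) < 0 := by
    have : 0 < 1/α := by positivity
    linarith
  have haanti : ∀ i k n, k < n → a n i < a k i := fun i k n hkn =>
    mul_lt_mul_of_pos_left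
      (Real.rpow_lt_rpow_of_neg (hSpos k i) (hSmono i k n hkn) hexp_neg) (htpos i)
  have hray : rayConfig α ν e γ ω = ⋃ i, Set.range fun n => a n i • e i := rfl
  have hPart1 : ∀ k, peelHull (rayConfig α ν e γ ω) k
      = convexHull ℝ (Set.range fun i => a k i • e i) := by
    intro k
    rw [hray]
    exact peelHull_eq hd hcone a hapos haanti k
  refine ⟨fun k => hPart1 k, ?_⟩
  -- limit part
  have hmaxn : ∀ n, maxNorm (peelHull (rayConfig α ν e γ ω) n) = ⨆ i, a n i := by
    intro n
    rw [hPart1 n, maxNorm_hull]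
    have hfe : (fun i => ‖a n i • e i‖) = fun i => a n i := funext fun i => by
      rw [norm_smul, he i, mul_one, Real.norm_eq_abs, abs_of_pos (hapos n i)]
    rw [hfe]
  have hsup_apos : ∀ n, 0 < ⨆ i, a n i := fun n =>
    lt_of_lt_of_le (hapos n 0) (le_ciSup (Set.Finite.bddAbove (Set.finite_range _)) 0)
  have hresc : ∀ n, (maxNorm (peelHull (rayConfig α ν e γ ω) n))⁻¹
        • peelHull (rayConfig α ν e γ ω) n
      = convexHull ℝ (Set.range fun i => (a n i / ⨆ j, a n j) • e i) := by
    intro n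
    rw [hmaxn n, hPart1 n, ← convexHull_smul]
    congr 1
    rw [Set.smul_set_range]
    refine congrArg _ (funext fun i => ?_)
    rw [smul_smul, inv_mul_eq_div]
  -- convergence of coefficients
  have hSn : ∀ i, Tendsto (fun n : ℕ => S n i / ((n:ℝ)+1)) atTop (𝓝 m) := by
    intro i
    have h1 := (hω2 i).comp (tendsto_add_atTop_nat 1)
    refine h1.congr fun n => ?_
    simp only [Function.comp_apply, hS]
    push_cast
    ring
  have hSdiv : ∀ i, Tendsto (fun n : ℕ => S n i / (((n:ℝ)+1) * m)) atTop (𝓝 1) := by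
    intro i
    have h1 := (hSn i).div_const m
    rw [div_self hm_pos.ne'] at h1
    refine h1.congr fun n => ?_
    rw [div_div]
  set g : ℕ → Fin (d+1) → ℝ :=
    fun n i => t i * (S n i / (((n:ℝ)+1) * m)) ^ (-(1/α) : ℝ) with hg
  have hg_tendsto : ∀ i, Tendsto (fun n => g n i) atTop (𝓝 (t i)) := by
    intro i
    have hc : ContinuousAt (fun x : ℝ => x ^ (-(1/α):ℝ)) 1 :=
      Real.continuousAt_rpow_const 1 _ (Or.inl one_ne_zero)
    have h2 := hc.tendsto.comp (hSdiv i)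
    rw [Real.one_rpow] at h2
    have h3 := h2.const_mul (t i)
    rw [mul_one] at h3
    exact h3.congr fun n => rfl
  have hg_eq : ∀ n i, g n i = a n i * ((((n:ℝ)+1) * m) ^ ((1/α):ℝ)) := by
    intro n i
    have hCpos : (0:ℝ) < ((n:ℝ)+1) * m := mul_pos (by positivity) hm_pos
    rw [hg, haa]
    show t i * (S n i / (((n:ℝ)+1) * m)) ^ (-(1/α):ℝ)
      = t i * (S n i) ^ (-(1/α):ℝ) * ((((n:ℝ)+1) * m) ^ ((1/α):ℝ))
    rw [Real.div_rpow (hSpos n i).le hCpos.le, Real.rpow_neg hCpos.le, div_eq_mul_inv, inv_inv, mul_assoc]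
  have hGn : Tendsto (fun n => ⨆ i, g n i) atTop (𝓝 (⨆ i, t i)) :=
    tendsto_fin_iSup g t hg_tendsto
  have hsup_tpos : 0 < ⨆ i, t i :=
    lt_of_lt_of_le (htpos 0) (le_ciSup (Set.Finite.bddAbove (Set.finite_range _)) 0)
  have hc_tendsto : ∀ i, Tendsto (fun n => a n i / ⨆ j, a n j) atTop
      (𝓝 (t i / ⨆ j, t j)) := by
    intro i
    have heq : ∀ n, a n i / (⨆ j, a n j) = g n i / (⨆ j, g n j) := by
      intro n
      have hCpos : (0:ℝ) < (((n:ℝ)+1) * m) ^ ((1/α):ℝ) :=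
        Real.rpow_pos_of_pos (mul_pos (by positivity) hm_pos) _
      have hsupg : (⨆ j, g n j) = (⨆ j, a n j) * ((((n:ℝ)+1) * m) ^ ((1/α):ℝ)) := by
        rw [fin_iSup_mul (fun j => a n j) hCpos.le]
        exact congrArg _ (funext fun j => hg_eq n j)
      rw [hsupg, hg_eq n i, mul_div_mul_right _ _ hCpos.ne']
    have h1 := (hg_tendsto i).div hGn hsup_tpos.ne'
    exact h1.congr fun n => (heq n).symm
  -- final squeeze
  have hbound : ∀ n, Metric.hausdorffDist
      ((maxNorm (peelHull (rayConfig α ν e γ ω) n))⁻¹ • peelHull (rayConfig α ν e γ ω) n)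
      (convexHull ℝ (Set.range fun i : Fin (d+1) =>
        ((ν i) ^ (1/α) / ⨆ j : Fin (d+1), (ν j) ^ (1/α)) • e i))
      ≤ ∑ i, |a n i / (⨆ j, a n j) - t i / (⨆ j, t j)| := by
    intro n
    rw [hresc n]
    have h1 := hausdorffDist_hull_le (fun i => (a n i / ⨆ j, a n j) • e i)
      (fun i => (t i / ⨆ j, t j) • e i)
    refine le_trans h1 (le_of_eq (Finset.sum_congr rfl fun i _ => ?_))
    rw [dist_eq_norm, ← sub_smul, norm_smul, he i, mul_one, Real.norm_eq_abs]
  refine squeeze_zero (fun n => Metric.hausdorffDist_nonneg) hbound ?_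
  have hzero : Tendsto (fun n => ∑ i : Fin (d+1), |a n i / (⨆ j, a n j) - t i / (⨆ j, t j)|)
      atTop (𝓝 (∑ i : Fin (d+1), (0:ℝ))) := by
    refine tendsto_finset_sum _ fun i _ => ?_
    have h2 : Tendsto (fun n => |a n i / (⨆ j, a n j) - t i / (⨆ j, t j)|) atTop
        (𝓝 |t i / (⨆ j, t j) - t i / (⨆ j, t j)|) :=
      ((hc_tendsto i).sub tendsto_const_nhds).abs
    simpa using h2
  simpa using hzero


end
end
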